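/- Let E be a finite nonempty set. There exist a finite set G and a bijection φ : E × G → E × G with the following universal property: for every transition rate matrix R on E there exist a probability vector q on G and a real λ > 0 such that R = λ(P − I), where P is the stochastic matrix with entries P_{ij} = ∑_{g∈G, φᴱ(i,g)=j} q_g and φᴱ : E × G → E denotes the first component of φ. -/

import Mathlib

/-- The "random mapping" shift: `(i, (f, k)) ↦ (f i, (update f i k, i))`, a bijection of
`E × ((E → E) × E)` whose first output component is `f i`. -/
def rmEquiv (E : Type*) [DecidableEq E] :
    (E × ((E → E) × E)) ≃ (E × ((E → E) × E)) where
  toFun p := (p.2.1 p.1, (Function.update p.2.1 p.1 p.2.2, p.1))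
  invFun p := (p.2.2, (Function.update p.2.1 p.2.2 p.1, p.2.1 p.2.2))
  left_inv p := by
    obtain ⟨i, f, k⟩ := p
    simp [Function.update_idem, Function.update_eq_self]
  right_inv p := by
    obtain ⟨j, g, i⟩ := p
    simp [Function.update_idem, Function.update_eq_self]

private lemma key_sum {E : Type*} [Fintype E] [DecidableEq E]
    (P : E → E → ℝ) (hrow : ∀ i, ∑ j, P i j = 1) (i j : E) :
    ∑ f : E → E, (if f i = j then ∏ x, P x (f x) else 0) = P i j := by
  classical
  have h1 : (Fintype.piFinset fun x => if x = i then ({j} : Finset E) else Finset.univ)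
      = Finset.univ.filter (fun f : E → E => f i = j) := by
    ext f
    simp only [Fintype.mem_piFinset, Finset.mem_filter, Finset.mem_univ, true_and]
    constructor
    · intro h; have := h i; simpa using this
    · intro h x; by_cases hx : x = i <;> simp [hx, h]
  calc ∑ f : E → E, (if f i = j then ∏ x, P x (f x) else 0)
      = ∑ f ∈ Finset.univ.filter (fun f : E → E => f i = j), ∏ x, P x (f x) := by
        rw [Finset.sum_filter]
    _ = ∑ f ∈ Fintype.piFinset (fun x => if x = i then ({j} : Finset E) else Finset.univ),
          ∏ x, P x (f x) := by rw [h1]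
    _ = ∏ x, ∑ y ∈ (if x = i then ({j} : Finset E) else Finset.univ), P x y :=
        (Finset.prod_univ_sum _ _).symm
    _ = P i j := by
        rw [Finset.prod_eq_single i]
        · simp
        · intro x _ hx; simp [hx, hrow x]
        · simp

/-- For every finite nonempty set `E` there exist a finite set `G` and a
bijection `φ : E × G → E × G` such that for every transition rate matrix `R` on `E` there
are a probability vector `q` on `G` and a rate `λ > 0` with `R = λ (P − I)`, where
`P i j = ∑_{g : φᴱ(i,g) = j} q g` and `φᴱ` is the first component of `φ`. -/
theorem stmt3 {E : Type*} [Fintype E] [Nonempty E] [DecidableEq E] :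
    ∃ (G : Type) (instG : Fintype G) (φ : (E × G) ≃ (E × G)),
      ∀ R : Matrix E E ℝ,
        (∀ i j, i ≠ j → 0 ≤ R i j) → (∀ i, ∑ j, R i j = 0) →
        ∃ (q : G → ℝ) (l : ℝ),
          (∀ g, 0 ≤ q g) ∧ (∑ g ∈ @Finset.univ G instG, q g) = 1 ∧ 0 < l ∧
          R = l • ((Matrix.of fun i j =>
              ∑ g ∈ @Finset.univ G instG, if (φ (i, g)).1 = j then q g else 0) - 1) := by
  classical
  set G : Type := Fin (Fintype.card ((E → E) × E)) with hG
  let e : ((E → E) × E) ≃ G := Fintype.equivFin _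
  let φ : (E × G) ≃ (E × G) :=
    ((Equiv.refl E).prodCongr e.symm).trans ((rmEquiv E).trans ((Equiv.refl E).prodCongr e))
  have hφ1 : ∀ (i : E) (g : G), (φ (i, g)).1 = (e.symm g).1 i := fun i g => rfl
  refine ⟨G, inferInstance, φ, ?_⟩
  intro R hoff hrow
  set l : ℝ := 1 + ∑ x, -R x x with hl
  have hdiag : ∀ i, R i i ≤ 0 := by
    intro i
    have h0 : R i i + ∑ j ∈ Finset.univ.erase i, R i j = ∑ j, R i j :=
      Finset.add_sum_erase _ _ (Finset.mem_univ i)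
    have h1 : 0 ≤ ∑ j ∈ Finset.univ.erase i, R i j :=
      Finset.sum_nonneg fun j hj => hoff i j (Ne.symm (Finset.ne_of_mem_erase hj))
    rw [hrow i] at h0
    linarith
  have hlpos : 0 < l := by
    have : 0 ≤ ∑ x, -R x x := Finset.sum_nonneg fun x _ => by linarith [hdiag x]
    linarith
  set P : E → E → ℝ := fun a b => R a b / l + if a = b then 1 else 0 with hP
  have hPnn : ∀ a b, 0 ≤ P a b := by
    intro a b
    by_cases hab : a = b
    · subst hab
      have h1 : -R a a ≤ l := by
        have : -R a a ≤ ∑ x, -R x x :=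
          Finset.single_le_sum (f := fun x => -R x x)
            (fun x _ => by simpa using hdiag x) (Finset.mem_univ a)
        linarith
      have h2 : -R a a / l ≤ 1 := (div_le_one hlpos).mpr h1
      have h3 : -(R a a / l) ≤ 1 := by rwa [neg_div] at h2
      have hPaa : P a a = R a a / l + 1 := by simp [hP]
      rw [hPaa]; linarith
    · have := hoff a b hab
      simp only [hP, if_neg hab]
      positivity
  have hProw : ∀ a, ∑ b, P a b = 1 := by
    intro a
    simp only [hP]
    rw [Finset.sum_add_distrib, ← Finset.sum_div, hrow a]
    simp
  let e₀ : E := Classical.arbitrary E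
  set q : G → ℝ := fun g =>
    if (e.symm g).2 = e₀ then ∏ x, P x ((e.symm g).1 x) else 0 with hq
  refine ⟨q, l, ?_, ?_, hlpos, ?_⟩
  · intro g
    simp only [hq]
    split
    · exact Finset.prod_nonneg fun x _ => hPnn _ _
    · exact le_refl 0
  · have h1 : ∑ g : G, q g =
        ∑ p : (E → E) × E, (if p.2 = e₀ then ∏ x, P x (p.1 x) else 0) :=
      Fintype.sum_equiv e.symm (fun g : G => q g)
        (fun p : (E → E) × E => if p.2 = e₀ then ∏ x, P x (p.1 x) else 0)
        (fun g => by rw [hq])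
    rw [h1, Fintype.sum_prod_type]
    have h2 : ∀ f : E → E,
        (∑ k, if k = e₀ then ∏ x, P x (f x) else 0) = ∏ x, P x (f x) := by
      intro f; simp
    rw [Finset.sum_congr rfl (fun f _ => h2 f)]
    have h3 : ∑ f ∈ Fintype.piFinset (fun _ : E => (Finset.univ : Finset E)),
        ∏ x, P x (f x) = ∏ x, ∑ y, P x y := (Finset.prod_univ_sum _ _).symm
    rw [Fintype.piFinset_univ] at h3
    rw [h3]
    simp [hProw]
  · have hofP : ∀ i j, (∑ g : G, if (φ (i, g)).1 = j then q g else 0) = P i j := by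
      intro i j
      have h1 : (∑ g : G, if (φ (i, g)).1 = j then q g else 0) =
          ∑ p : (E → E) × E,
            (if p.1 i = j then (if p.2 = e₀ then ∏ x, P x (p.1 x) else 0) else 0) := by
        refine Fintype.sum_equiv e.symm _ _ (fun g => ?_)
        rw [hφ1, hq]
      rw [h1, Fintype.sum_prod_type]
      have h2 : ∀ f : E → E,
          (∑ k, if f i = j then (if k = e₀ then ∏ x, P x (f x) else 0) else 0)
            = (if f i = j then ∏ x, P x (f x) else 0) := by
        intro f
        by_cases hf : f i = j <;> simp [hf]
      rw [Finset.sum_congr rfl (fun f _ => h2 f)]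
      exact key_sum P hProw i j
    ext i j
    simp only [Matrix.smul_apply, Matrix.sub_apply, Matrix.of_apply, Matrix.one_apply]
    rw [hofP i j]
    simp only [hP]
    have hl0 : l ≠ 0 := ne_of_gt hlpos
    field_simp
    rw [smul_eq_mul, add_sub_cancel_right]
    field_simp
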